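/- Let p > 2 be a prime, let i and j be nonnegative integers, and let k be an integer with 0 ≤ k < p. Then the sum over m from 0 to k of C(k+(i+j)p, m+ip) is congruent modulo p^2 (as rational numbers) to 2^k * C(i+j, i) * (1 + p*(i+j)*(sum over m from 1 to k of 1/(m*2^m))). -/

import Mathlib

open Finset Nat

def Hh (p b : ℕ) : ZMod (p^2) := ∑ t ∈ Icc 1 b, (t : ZMod (p^2))⁻¹

lemma unit_fac {p : ℕ} (hp : p.Prime) {b : ℕ} (h : b < p) :
    IsUnit ((b ! : ℕ) : ZMod (p^2)) := by
  rw [ZMod.isUnit_iff_coprime]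
  refine Nat.Coprime.pow_right _ ?_
  exact Nat.Coprime.symm (hp.coprime_iff_not_dvd.mpr
    (fun hd => absurd ((hp.dvd_factorial).mp hd) (not_le.mpr h)))

lemma unit_lt {p : ℕ} (hp : p.Prime) {t : ℕ} (h0 : t ≠ 0) (h : t < p) :
    IsUnit ((t : ZMod (p^2))) := by
  rw [ZMod.isUnit_iff_coprime]
  refine Nat.Coprime.pow_right _ ?_
  exact Nat.Coprime.symm (hp.coprime_iff_not_dvd.mpr
    (fun hd => absurd (Nat.le_of_dvd (Nat.pos_of_ne_zero h0) hd) (not_le.mpr h)))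

lemma pp_zero {p : ℕ} : (p : ZMod (p^2)) * (p : ZMod (p^2)) = 0 := by
  have := ZMod.natCast_self (p^2)
  push_cast at this
  linear_combination this

lemma prod_lin {p : ℕ} (hp : p.Prime) (a : ℕ) {b : ℕ} (hb : b < p) :
    (∏ t ∈ Icc 1 b, ((a * p + t : ℕ) : ZMod (p^2))) =
      (b ! : ZMod (p^2)) * (1 + p * a * Hh p b) := by
  induction b with
  | zero => simp [Hh]
  | succ b ih =>
    have hb' : b < p := by omega
    rw [Finset.prod_Icc_succ_top (by omega), ih hb']
    have hu : IsUnit ((b+1 : ℕ) : ZMod (p^2)) := unit_lt hp (by omega) hb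
    have hx : ((b+1 : ℕ) : ZMod (p^2)) * ((b+1 : ℕ) : ZMod (p^2))⁻¹ = 1 :=
      ZMod.mul_inv_of_unit _ hu
    have hH : Hh p (b+1) = Hh p b + ((b+1 : ℕ) : ZMod (p^2))⁻¹ := by
      unfold Hh; rw [Finset.sum_Icc_succ_top (by omega)]
    rw [hH]
    have hc : ((a * p + (b+1) : ℕ) : ZMod (p^2)) = (p : ZMod (p^2)) * a + ((b+1:ℕ) : ZMod (p^2)) := by
      push_cast; ring
    rw [hc]
    have hf : ((b+1)! : ZMod (p^2)) = ((b+1 : ℕ) : ZMod (p^2)) * (b ! : ZMod (p^2)) := by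
      rw [Nat.factorial_succ]; push_cast; ring
    rw [hf]
    set x := ((b+1 : ℕ) : ZMod (p^2))
    set H := Hh p b
    set P := (p : ZMod (p^2))
    set A := (a : ZMod (p^2))
    set F := ((b ! : ℕ) : ZMod (p^2))
    -- goal: F * (1 + P*A*H) * (P*A + x) = x * F * (1 + P*A*(H + x⁻¹))
    linear_combination (F * A * A * H) * (pp_zero (p := p)) - (F * P * A) * hx

lemma psum {p : ℕ} (hp : p.Prime) (hp2 : 2 < p) :
    (p : ZMod (p^2)) * Hh p (p - 1) = 0 := by
  unfold Hh
  rw [Finset.mul_sum]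
  refine Finset.sum_involution (fun t _ => p - t) ?_ ?_ ?_ ?_
  · intro t ht
    simp only [Finset.mem_Icc] at ht
    have h1 : t ≠ 0 := by omega
    have h2 : t < p := by omega
    have h3 : p - t ≠ 0 := by omega
    have h4 : p - t < p := by omega
    have hT := ZMod.mul_inv_of_unit _ (unit_lt hp h1 h2)
    have hY := ZMod.mul_inv_of_unit _ (unit_lt hp h3 h4)
    have hy2 : ((p - t : ℕ) : ZMod (p^2)) = (p : ZMod (p^2)) - (t : ℕ) := by
      push_cast [Nat.cast_sub h2.le]; ring
    set P := ((p : ℕ) : ZMod (p^2))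
    set T := ((t : ℕ) : ZMod (p^2))
    set Y := ((p - t : ℕ) : ZMod (p^2))
    -- goal : P * T⁻¹ + P * Y⁻¹ = 0
    have hpp : P * P = 0 := pp_zero
    linear_combination (-(P * T⁻¹)) * hY + (-(P * Y⁻¹)) * hT + (P * T⁻¹ * Y⁻¹) * hy2 +
      (T⁻¹ * Y⁻¹) * hpp
  · intro t ht _
    simp only [Finset.mem_Icc] at ht
    intro heq
    have h2 : 2 ∣ p := ⟨t, by omega⟩
    rcases (hp.eq_one_or_self_of_dvd 2 h2) with h | h <;> omega
  · intro t ht; simp only [Finset.mem_Icc] at ht ⊢; omega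
  · intro t ht; simp only [Finset.mem_Icc] at ht; omega

lemma fac_add (n m : ℕ) : (n + m)! = n ! * ∏ t ∈ Icc 1 m, (n + t) := by
  induction m with
  | zero => simp
  | succ m ih =>
    rw [Finset.prod_Icc_succ_top (Nat.le_add_left 1 m), ← Nat.add_assoc, Nat.factorial_succ, ih]
    ring

lemma fac_mul {p : ℕ} (hp : p.Prime) (a : ℕ) :
    (a * p)! = p^a * a ! * ∏ s ∈ range a, ∏ t ∈ Icc 1 (p-1), (s * p + t) := by
  induction a with
  | zero => simp
  | succ a ih =>
    have hp1 : 1 ≤ p := hp.one_lt.le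
    have h1 : (a+1) * p = a * p + p := by ring
    rw [h1, fac_add, Finset.prod_range_succ]
    have h2 := Finset.prod_Icc_succ_top (a := 1) (b := p - 1) (by omega) (fun t => a * p + t)
    rw [show p - 1 + 1 = p from by omega] at h2
    rw [h2, ih]
    have h3 : a * p + p = p * (a+1) := by ring
    rw [h3, Nat.factorial_succ]
    ring

lemma fac_split {p : ℕ} (hp : p.Prime) (a b : ℕ) :
    (a * p + b)! = p^a * a ! *
      ((∏ s ∈ range a, ∏ t ∈ Icc 1 (p-1), (s * p + t)) * ∏ t ∈ Icc 1 b, (a * p + t)) := by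
  rw [fac_add (a*p) b, fac_mul hp a]; ring

lemma key_nat {p : ℕ} (hp : p.Prime) {a b c d : ℕ} (hca : c ≤ a) (hdb : d ≤ b) :
    (a*p+b).choose (c*p+d) *
      ((∏ s ∈ range c, ∏ t ∈ Icc 1 (p-1), (s * p + t)) * (∏ t ∈ Icc 1 d, (c * p + t)) *
       ((∏ s ∈ range (a-c), ∏ t ∈ Icc 1 (p-1), (s * p + t)) * (∏ t ∈ Icc 1 (b-d), ((a-c) * p + t))))
    = a.choose c *
      ((∏ s ∈ range a, ∏ t ∈ Icc 1 (p-1), (s * p + t)) * (∏ t ∈ Icc 1 b, (a * p + t))) := by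
  have hle : c*p+d ≤ a*p+b := by
    have := Nat.mul_le_mul_right p hca; omega
  have hsub : (a*p+b) - (c*p+d) = (a-c)*p + (b-d) := by
    rcases Nat.exists_eq_add_of_le hca with ⟨a', rfl⟩
    rcases Nat.exists_eq_add_of_le hdb with ⟨b', rfl⟩
    have h1 : (c+a')*p + (d+b') = (c*p + d) + (a'*p + b') := by ring
    have h2 : c + a' - c = a' := by omega
    have h3 : d + b' - d = b' := by omega
    rw [h1, h2, h3, Nat.add_sub_cancel_left]
  have hmain := Nat.choose_mul_factorial_mul_factorial hle
  rw [hsub, fac_split hp a b, fac_split hp c d, fac_split hp (a-c) (b-d)] at hmain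
  have habc := Nat.choose_mul_factorial_mul_factorial hca
  have hK : ((p:ℤ)^a * ((c ! : ℕ) : ℤ)) * (((a-c)! : ℕ) : ℤ) ≠ 0 := by
    have h1 := Nat.factorial_pos c
    have h2 := Nat.factorial_pos (a-c)
    have h3 := hp.pos
    positivity
  have hpow : (p:ℤ)^c * (p:ℤ)^(a-c) = (p:ℤ)^a := by
    rw [← pow_add]; congr 1; omega
  have e1 := congrArg (Nat.cast : ℕ → ℤ) hmain
  have e2 := congrArg (Nat.cast : ℕ → ℤ) habc
  simp only [Nat.cast_mul, Nat.cast_pow] at e1 e2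
  rw [← Nat.cast_inj (R := ℤ)]
  simp only [Nat.cast_mul, Nat.cast_pow]
  apply mul_left_cancel₀ hK
  set Q1 := ((∏ s ∈ range c, ∏ t ∈ Icc 1 (p-1), (s * p + t) : ℕ) : ℤ)
  set Q2 := ((∏ s ∈ range (a-c), ∏ t ∈ Icc 1 (p-1), (s * p + t) : ℕ) : ℤ)
  set Q3 := ((∏ s ∈ range a, ∏ t ∈ Icc 1 (p-1), (s * p + t) : ℕ) : ℤ)
  set P1 := ((∏ t ∈ Icc 1 d, (c * p + t) : ℕ) : ℤ)
  set P2 := ((∏ t ∈ Icc 1 (b-d), ((a-c) * p + t) : ℕ) : ℤ)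
  set P3 := ((∏ t ∈ Icc 1 b, (a * p + t) : ℕ) : ℤ)
  set C1 := (((a*p+b).choose (c*p+d) : ℕ) : ℤ)
  set C2 := ((a.choose c : ℕ) : ℤ)
  -- e1 : C1 * (p^c * c! * (Q1 * P1)) * (p^(a-c) * (a-c)! * (Q2 * P2)) = p^a * a! * (Q3 * P3)
  -- e2 : C2 * c! * (a-c)! = a!
  linear_combination e1 - (Q3 * P3 * (p:ℤ)^a) * e2 -
    (C1 * ((c ! : ℕ):ℤ) * (((a-c)! : ℕ):ℤ) * Q1 * P1 * Q2 * P2) * hpow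

lemma prod_const {p : ℕ} (hp : p.Prime) (hp2 : 2 < p) (s : ℕ) :
    (∏ t ∈ Icc 1 (p-1), ((s * p + t : ℕ) : ZMod (p^2))) = (((p-1)! : ℕ) : ZMod (p^2)) := by
  rw [prod_lin hp s (by omega)]
  have h := psum hp hp2
  linear_combination ((((p-1)! : ℕ) : ZMod (p^2)) * s) * h

lemma key_mod {p : ℕ} (hp : p.Prime) (hp2 : 2 < p) {a b c d : ℕ}
    (hca : c ≤ a) (hdb : d ≤ b) (hbp : b < p) :
    (((a*p+b).choose (c*p+d) : ℕ) : ZMod (p^2)) =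
      (a.choose c : ℕ) * ((b.choose d : ℕ) : ZMod (p^2)) *
        (1 + p * a * Hh p b - p * c * Hh p d - p * ((a-c : ℕ) : ZMod (p^2)) * Hh p (b-d)) := by
  have E := congrArg (Nat.cast : ℕ → ZMod (p^2)) (key_nat hp hca hdb (p := p))
  simp only [Nat.cast_mul, Nat.cast_prod] at E
  rw [Finset.prod_congr rfl (fun s _ => prod_const hp hp2 s),
      Finset.prod_congr rfl (fun s _ => prod_const hp hp2 s),
      Finset.prod_congr rfl (fun s _ => prod_const hp hp2 s)] at E
  rw [Finset.prod_const, Finset.prod_const, Finset.prod_const, Finset.card_range,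
      Finset.card_range, Finset.card_range] at E
  rw [prod_lin hp c (by omega), prod_lin hp (a-c) (by omega), prod_lin hp a hbp] at E
  set R := ZMod (p^2)
  set π := (((p-1)! : ℕ) : R)
  set Fd := ((d ! : ℕ) : R)
  set Fbd := (((b-d)! : ℕ) : R)
  set Fb := ((b ! : ℕ) : R)
  set Hd := Hh p d
  set H' := Hh p (b-d)
  set Hb := Hh p b
  set C1 := (((a*p+b).choose (c*p+d) : ℕ) : R)
  set C2 := ((a.choose c : ℕ) : R)
  set Cbd := ((b.choose d : ℕ) : R)
  set P := ((p : ℕ) : R)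
  set A' := ((a : ℕ) : R)
  set Cc := ((c : ℕ) : R)
  set Jj := (((a - c : ℕ) : ℕ) : R)
  have hb! : Cbd * Fd * Fbd = Fb := by
    have := congrArg (Nat.cast : ℕ → R) (Nat.choose_mul_factorial_mul_factorial hdb)
    rw [Nat.cast_mul, Nat.cast_mul] at this; exact this
  have hππ : π^c * π^(a-c) = π^a := by
    rw [← pow_add]; congr 1; omega
  have hU : IsUnit (π^a * (Fd * Fbd)) := by
    exact ((unit_fac hp (by omega)).pow a).mul ((unit_fac hp (by omega)).mul (unit_fac hp (by omega)))
  have E2 : (C1 * (1 + P*Cc*Hd) * (1 + P*Jj*H')) * (π^a * (Fd * Fbd))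
      = (C2 * Cbd * (1 + P*A'*Hb)) * (π^a * (Fd * Fbd)) := by
    linear_combination E - (C1 * (1 + P*Cc*Hd) * (1 + P*Jj*H') * Fd * Fbd) * hππ -
      (C2 * (1 + P*A'*Hb) * π^a) * hb!
  have h12 := hU.mul_right_cancel E2
  have hpp : P * P = 0 := pp_zero
  linear_combination ((1 - P*Cc*Hd) * (1 - P*Jj*H')) * h12 +
    (C1*(Cc*Hd*Cc*Hd + Jj*H'*Jj*H' - (P*P)*(Cc*Hd)^2*(Jj*H')^2)
      + C2*Cbd*((Cc*Hd)*(Jj*H') - (A'*Hb)*(Cc*Hd) - (A'*Hb)*(Jj*H') + P*(A'*Hb)*(Cc*Hd)*(Jj*H'))) * hpp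

def Ss (p k : ℕ) : ZMod (p^2) := ∑ m ∈ Icc 1 k, (m : ZMod (p^2))⁻¹ * ((2:ZMod (p^2))^m)⁻¹

lemma Hh_zero {p : ℕ} : Hh p 0 = 0 := by simp [Hh]

lemma Hh_succ {p : ℕ} (m : ℕ) : Hh p (m+1) = Hh p m + ((m+1 : ℕ) : ZMod (p^2))⁻¹ :=
  Finset.sum_Icc_succ_top (by omega) _

lemma Ss_succ {p : ℕ} (m : ℕ) :
    Ss p (m+1) = Ss p m + ((m+1 : ℕ) : ZMod (p^2))⁻¹ * ((2:ZMod (p^2))^(m+1))⁻¹ :=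
  Finset.sum_Icc_succ_top (by omega) _

lemma lemB {p : ℕ} (hp : p.Prime) (hp2 : 2 < p) :
    ∀ {k : ℕ}, k < p →
    ∑ m ∈ range (k+1), ((k.choose m : ℕ) : ZMod (p^2)) * Hh p m
      = 2^k * Hh p k - 2^k * Ss p k := by
  intro k
  induction k with
  | zero => intro _; simp [Hh_zero, Ss]
  | succ k ih =>
    intro hkp
    set R := ZMod (p^2)
    have ihk := ih (by omega)
    have hK := ZMod.mul_inv_of_unit _ (unit_lt hp (show k+1 ≠ 0 by omega) hkp)
    have h2u : IsUnit ((2:R)) := by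
      have := unit_lt hp (show (2:ℕ) ≠ 0 by omega) hp2
      simpa using this
    have h2 := ZMod.mul_inv_of_unit _ (h2u.pow (k+1))
    -- split off m = 0
    rw [Finset.sum_range_succ' (fun m => ((k+1).choose m : ℕ) * Hh p m : ℕ → R) (k+1)]
    simp only [Nat.choose_zero_right, Hh_zero, mul_zero, add_zero]
    -- Pascal
    have hpas : ∀ m, (((k+1).choose (m+1) : ℕ) : R) * Hh p (m+1)
        = ((k.choose m : ℕ) : R) * Hh p (m+1) + ((k.choose (m+1) : ℕ) : R) * Hh p (m+1) := by
      intro m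
      rw [Nat.choose_succ_succ]
      push_cast
      ring
    rw [Finset.sum_congr rfl (fun m _ => hpas m), Finset.sum_add_distrib]
    -- second sum equals W k
    have hs2 : ∑ m ∈ range (k+1), ((k.choose (m+1) : ℕ) : R) * Hh p (m+1)
        = ∑ m ∈ range (k+1), ((k.choose m : ℕ) : R) * Hh p m := by
      have h := Finset.sum_range_succ' (fun m => ((k.choose m : ℕ) : R) * Hh p m) (k+1)
      have h' := Finset.sum_range_succ (fun m => ((k.choose m : ℕ) : R) * Hh p m) (k+1)
      simp only [Hh_zero, mul_zero, add_zero, Nat.choose_succ_self, Nat.cast_zero,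
        zero_mul] at h h'
      linear_combination h' - h
    -- first sum
    have hs1 : ∑ m ∈ range (k+1), ((k.choose m : ℕ) : R) * Hh p (m+1)
        = (∑ m ∈ range (k+1), ((k.choose m : ℕ) : R) * Hh p m)
          + ∑ m ∈ range (k+1), ((k.choose m : ℕ) : R) * ((m+1 : ℕ) : R)⁻¹ := by
      rw [← Finset.sum_add_distrib]
      refine Finset.sum_congr rfl (fun m _ => ?_)
      rw [Hh_succ]; ring
    -- the inverse sum
    have hsc : ∑ m ∈ range (k+1), ((k.choose m : ℕ) : R) * ((m+1 : ℕ) : R)⁻¹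
        = ((k+1 : ℕ) : R)⁻¹ * (2^(k+1) - 1) := by
      have hterm : ∀ m ∈ range (k+1), ((k.choose m : ℕ) : R) * ((m+1 : ℕ) : R)⁻¹
          = ((k+1 : ℕ) : R)⁻¹ * (((k+1).choose (m+1) : ℕ) : R) := by
        intro m hm
        simp only [Finset.mem_range] at hm
        have hM := ZMod.mul_inv_of_unit _ (unit_lt hp (show m+1 ≠ 0 by omega) (by omega))
        have hid := congrArg (Nat.cast : ℕ → R) (Nat.add_one_mul_choose_eq k m)
        rw [Nat.cast_mul, Nat.cast_mul] at hid
        -- hid : (k+1) * C(k,m) = C(k+1,m+1) * (m+1)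
        linear_combination (norm := (push_cast; ring1)) (((k+1:ℕ):R)⁻¹ * ((m+1:ℕ):R)⁻¹) * hid
          + (((k+1:ℕ):R)⁻¹ * (((k+1).choose (m+1) : ℕ):R)) * hM
          - (((k.choose m : ℕ):R) * ((m+1:ℕ):R)⁻¹) * hK
      rw [Finset.sum_congr rfl hterm, ← Finset.mul_sum]
      congr 1
      have hn : ∑ m ∈ range (k+1), (k+1).choose (m+1) = 2^(k+1) - 1 := by
        have h := Nat.sum_range_choose (k+1)
        have h' := Finset.sum_range_succ' (fun m => (k+1).choose m) (k+1)
        simp only [Nat.choose_zero_right] at h'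
        omega
      have := congrArg (Nat.cast : ℕ → R) hn
      push_cast [Nat.cast_sub (Nat.one_le_two_pow)] at this
      rw [← Nat.cast_sum, hn, Nat.cast_sub Nat.one_le_two_pow]; norm_num
    rw [hs1, hs2, hsc, ihk, Hh_succ, Ss_succ]
    -- final ring identity
    linear_combination (norm := (push_cast; ring1)) (((k+1:ℕ):R)⁻¹) * h2

theorem stmt_11 (p : ℕ) (hp : p.Prime) (hp2 : 2 < p) (i j : ℕ)
    (k : ℕ) (hkp : k < p) :
    padicNorm p
        ((∑ m ∈ Finset.range (k + 1), ((k + (i + j) * p).choose (m + i * p) : ℚ)) -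
          2^k * ((i + j).choose i : ℚ) *
            (1 + (p : ℚ) * ((i : ℚ) + (j : ℚ)) *
              ∑ m ∈ Finset.Icc 1 k, 1 / ((m : ℚ) * 2^m))) ≤
      (p : ℚ)^(-2 : ℤ) := by
  haveI := Fact.mk hp
  set R := ZMod (p^2)
  set N := i + j with hN
  set Sn : ℕ := ∑ m ∈ range (k+1), (k + N*p).choose (m + i*p) with hSn
  set Dn : ℕ := k ! * 2^k with hDn
  set Tn : ℕ := ∑ m ∈ Icc 1 k, (k ! / m) * 2^(k-m) with hTn
  set An : ℕ := Dn * Sn with hAn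
  set Bn : ℕ := 2^k * N.choose i * (Dn + p * N * Tn) with hBn
  -- Part I : congruence in R
  have hterm : ∀ m ∈ range (k+1), (((k + N*p).choose (m + i*p) : ℕ) : R)
      = (N.choose i : ℕ) * ((k.choose m : ℕ) : R) *
          (1 + p * N * Hh p k - p * i * Hh p m - p * (j : R) * Hh p (k-m)) := by
    intro m hm
    simp only [Finset.mem_range] at hm
    rw [show k + N*p = N*p + k from by ring, show m + i*p = i*p + m from by ring]
    have := key_mod hp hp2 (a := N) (b := k) (c := i) (d := m)
      (by omega) (by omega) hkp
    rw [show N - i = j from by omega] at this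
    exact this
  have hchoose : (∑ m ∈ range (k+1), ((k.choose m : ℕ) : R)) = (2:R)^k := by
    have := congrArg (Nat.cast : ℕ → R) (Nat.sum_range_choose k)
    push_cast at this
    rw [← Nat.cast_sum, Nat.sum_range_choose]; norm_num
  have hrefl : ∑ m ∈ range (k+1), ((k.choose m : ℕ) : R) * Hh p (k-m)
      = ∑ m ∈ range (k+1), ((k.choose m : ℕ) : R) * Hh p m := by
    have h := Finset.sum_range_reflect (fun m => ((k.choose m : ℕ) : R) * Hh p m) (k+1)
    simp only [Nat.add_sub_cancel] at h
    rw [← h]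
    refine Finset.sum_congr rfl (fun m hm => ?_)
    simp only [Finset.mem_range] at hm
    rw [Nat.choose_symm (by omega)]
  have hB := lemB hp hp2 hkp
  have hSS : ((Sn : ℕ) : R) = (N.choose i : ℕ) * ((2:R)^k + p * N * (2:R)^k * Ss p k) := by
    rw [hSn, Nat.cast_sum, Finset.sum_congr rfl hterm]
    have hsplit : ∀ m, (N.choose i : ℕ) * ((k.choose m : ℕ) : R) *
          (1 + p * N * Hh p k - p * i * Hh p m - p * (j : R) * Hh p (k-m))
        = ((N.choose i : ℕ) * (1 + p * N * Hh p k)) * ((k.choose m : ℕ) : R)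
          - ((N.choose i : ℕ) * (p * i)) * (((k.choose m : ℕ) : R) * Hh p m)
          - ((N.choose i : ℕ) * (p * (j:R))) * (((k.choose m : ℕ) : R) * Hh p (k-m)) := by
      intro m; ring
    rw [Finset.sum_congr rfl (fun m _ => hsplit m)]
    rw [Finset.sum_sub_distrib, Finset.sum_sub_distrib, ← Finset.mul_sum, ← Finset.mul_sum,
      ← Finset.mul_sum, hchoose, hrefl, hB]
    have hNc : ((N : ℕ) : R) = (i : R) + (j : R) := by rw [hN]; push_cast; ring
    linear_combination (norm := (push_cast; ring1))
      (((N.choose i : ℕ) : R) * (p:R) * (2:R)^k * (Hh p k - Ss p k)) * hNc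
  have hT : ((Tn : ℕ) : R) = ((k ! : ℕ) : R) * (2:R)^k * Ss p k := by
    rw [hTn, Nat.cast_sum, Ss, Finset.mul_sum]
    refine Finset.sum_congr rfl (fun m hm => ?_)
    simp only [Finset.mem_Icc] at hm
    have hdvd : m ∣ k ! := Nat.dvd_factorial (by omega) hm.2
    have h1 : ((k ! / m : ℕ) : R) * (m : R) = ((k ! : ℕ) : R) := by
      rw [← Nat.cast_mul, Nat.div_mul_cancel hdvd]
    have h2 : (2:R)^(k-m) * (2:R)^m = (2:R)^k := by
      rw [← pow_add]; congr 1; omega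
    have hM := ZMod.mul_inv_of_unit _ (unit_lt hp (show m ≠ 0 by omega) (by omega))
    have h2u : IsUnit ((2:R)) := by
      have := unit_lt hp (show (2:ℕ) ≠ 0 by omega) hp2
      simpa using this
    have h2m := ZMod.mul_inv_of_unit _ (h2u.pow m)
    push_cast
    linear_combination (norm := (push_cast; ring1))
      ((2:R)^k * ((m:R))⁻¹ * ((2:R)^m)⁻¹) * h1
      + (((k ! / m : ℕ):R) * ((2:R)^m)⁻¹) * h2
      - (((k ! / m : ℕ):R) * (2:R)^k * ((2:R)^m)⁻¹) * hM
      - (((k ! / m : ℕ):R) * (2:R)^(k-m)) * h2m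
  have hAB : ((An : ℕ) : R) = ((Bn : ℕ) : R) := by
    rw [hAn, hBn, hDn]
    push_cast [R]
    rw [hSS, hT]  -- may need cast forms
    push_cast [R]
    ring
  -- Part II : back to ℚ
  have hDq : ((Dn:ℕ):ℚ) ≠ 0 := by
    have h0 : 0 < Dn := by rw [hDn]; positivity
    exact_mod_cast h0.ne'
  have hTq : ((Tn:ℕ):ℚ) = ((Dn:ℕ):ℚ) * ∑ m ∈ Icc 1 k, 1 / ((m:ℚ) * 2^m) := by
    rw [hTn, hDn, Nat.cast_sum, Finset.mul_sum]
    refine Finset.sum_congr rfl (fun m hm => ?_)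
    simp only [Finset.mem_Icc] at hm
    have hdvd : m ∣ k ! := Nat.dvd_factorial (by omega) hm.2
    obtain ⟨q, hq⟩ := hdvd
    have hm0 : 0 < m := by omega
    have hdiv : k ! / m = q := by rw [hq]; exact Nat.mul_div_cancel_left q hm0
    rw [hdiv, hq]
    have h2 : (2:ℚ)^(k-m) * (2:ℚ)^m = 2^k := by rw [← pow_add]; congr 1; omega
    have hm0' : ((m:ℕ):ℚ) ≠ 0 := by exact_mod_cast hm0.ne'
    have h2m : ((2:ℚ)^m) ≠ 0 := by positivity
    push_cast
    field_simp
    linear_combination (q:ℚ) * h2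
  have hkey : ((∑ m ∈ Finset.range (k + 1), ((k + N * p).choose (m + i * p) : ℚ)) -
          2^k * ((N).choose i : ℚ) *
            (1 + (p : ℚ) * ((i : ℚ) + (j : ℚ)) *
              ∑ m ∈ Finset.Icc 1 k, 1 / ((m : ℚ) * 2^m)))
      = (((An:ℕ):ℚ) - ((Bn:ℕ):ℚ)) / ((Dn:ℕ):ℚ) := by
    rw [eq_div_iff hDq]
    rw [hAn, hBn, hSn]
    push_cast [hN]
    push_cast [hN] at hTq
    linear_combination ((2:ℚ)^k * ((i+j).choose i : ℚ) * (p:ℚ) * ((i:ℚ)+(j:ℚ))) * hTq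
  have hAB' : ((p^2 : ℕ) : ℤ) ∣ ((An:ℤ) - (Bn:ℤ)) := by
    have h0 : ((((An:ℤ) - (Bn:ℤ)) : ℤ) : R) = 0 := by
      push_cast
      rw [hAB]
      ring
    exact (ZMod.intCast_zmod_eq_zero_iff_dvd _ _).mp h0
  have hnorm : padicNorm p ((((An:ℤ) - (Bn:ℤ)) : ℤ) : ℚ) ≤ (p:ℚ)^(-2:ℤ) := by
    have h1 := (padicNorm.dvd_iff_norm_le (p := p) (n := 2) (z := (An:ℤ) - (Bn:ℤ))).mp
    simp only [Nat.cast_ofNat] at h1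
    have := h1 (by exact_mod_cast hAB')
    convert this using 2 <;> norm_num
  rw [hkey, padicNorm.div]
  have hD1 : padicNorm p ((Dn:ℕ):ℚ) = 1 := by
    rw [show ((Dn:ℕ):ℚ) = (((Dn:ℕ):ℤ):ℚ) from by push_cast; ring,
      padicNorm.int_eq_one_iff, Int.natCast_dvd_natCast]
    intro hdvd
    rw [hDn] at hdvd
    rcases (Nat.Prime.dvd_mul hp).mp hdvd with h | h
    · exact absurd ((Nat.Prime.dvd_factorial hp).mp h) (by omega)
    · have h2 := Nat.le_of_dvd (by norm_num) (Nat.Prime.dvd_of_dvd_pow hp h)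
      omega
  rw [hD1, div_one]
  have : (((An:ℕ):ℚ) - ((Bn:ℕ):ℚ)) = ((((An:ℤ) - (Bn:ℤ)) : ℤ) : ℚ) := by push_cast; ring
  rw [this]
  exact hnorm
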